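/- The sum of the lengths of the segments of a closed path in a Diophantine figure is an even integer: if n ≥ 1, P₀, P₁, …, Pₙ are points of ℤ × ℤ with Pₙ = P₀, and d₀, …, d_{n−1} are nonnegative integers with d_j² equal to the squared Euclidean distance between P_j and P_{j+1} for each j, then d₀ + d₁ + ⋯ + d_{n−1} is even. -/
import Mathlib


/-- the sum of the lengths of the segments of a closed
path in a Diophantine figure is even. -/
theorem diophantine_closed_path_length_even (n : ℕ) (hn : 1 ≤ n)
    (P : ℕ → ℤ × ℤ) (hclosed : P n = P 0) (d : ℕ → ℕ)
    (hd : ∀ j < n, (d j : ℤ) ^ 2 =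
      ((P j).1 - (P (j + 1)).1) ^ 2 + ((P j).2 - (P (j + 1)).2) ^ 2) :
    Even (∑ j ∈ Finset.range n, d j) := by
  haveI : Fact (Nat.Prime 2) := ⟨Nat.prime_two⟩
  have h2 : ((∑ j ∈ Finset.range n, d j : ℕ) : ZMod 2) = 0 := by
    push_cast
    -- each term equals f j - f (j+1) with f j := x_j + y_j in ZMod 2
    have key : ∀ j < n, ((d j : ZMod 2)) =
        (((P j).1 + (P j).2 : ℤ) : ZMod 2) - (((P (j+1)).1 + (P (j+1)).2 : ℤ) : ZMod 2) := by
      intro j hj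
      have h := hd j hj
      have h' : ((d j : ZMod 2)) ^ 2 =
          (((P j).1 - (P (j+1)).1 : ℤ) : ZMod 2) ^ 2 + (((P j).2 - (P (j+1)).2 : ℤ) : ZMod 2) ^ 2 := by
        have := congrArg (algebraMap ℤ (ZMod 2)) h
        push_cast at this
        exact_mod_cast this
      have sq : ∀ x : ZMod 2, x ^ 2 = x := fun x => ZMod.pow_card x
      rw [sq, sq, sq] at h'
      rw [h']
      push_cast
      ring
    rw [Finset.sum_congr rfl (fun j hj => key j (Finset.mem_range.mp hj))]
    rw [Finset.sum_range_sub' (fun j => (((P j).1 + (P j).2 : ℤ) : ZMod 2))]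
    rw [hclosed]
    ring
  have := (ZMod.natCast_eq_zero_iff _ 2).mp h2
  exact even_iff_two_dvd.mpr this
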